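/- Let Δ₊ be the semi-simplex category, w : ℕ → Bool, and let J_w be the Grothendieck topology on Δ₊ in which a sieve S on [k] covers if and only if every morphism f : [l] ⟶ [k] with w l = false belongs to S. Let F be a presheaf on Δ₊, G ≤ F a subpresheaf, and Ḡ the J_w-closure of G. Then: (i) if w k = false then Ḡ([k]) = G([k]); (ii) if w 0 = true then Ḡ([0]) = F([0]); and (iii) if k ≥ 1 and w k = true then Ḡ([k]) = { x ∈ F([k]) | for every 0 ≤ i ≤ k, F(δᵢ)(x) ∈ Ḡ([k-1]) }. -/

import Mathlib

open CategoryTheory Simplicial Opposite CategoryTheory.GrothendieckTopology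

universe w

/-- The semi-simplex category: the wide subcategory of `SimplexCategory`
whose morphisms are the monomorphisms. -/
abbrev SemiSimplexCat : Type :=
  WideSubcategory (MorphismProperty.monomorphisms SimplexCategory)

/-- The coface map `δ i : [k] ⟶ [k+1]` as a morphism of the semi-simplex category. -/
def semiδ {k : ℕ} (i : Fin (k + 2)) : (⟨⦋k⦌⟩ : SemiSimplexCat) ⟶ ⟨⦋k + 1⦌⟩ :=
  ⟨SimplexCategory.δ i, inferInstanceAs (Mono (SimplexCategory.δ i))⟩


universe u

theorem stmt7 (w : ℕ → Bool) (J : GrothendieckTopology SemiSimplexCat)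
    (hJ : ∀ (X : SemiSimplexCat) (S : Sieve X),
      S ∈ J X ↔ ∀ (Y : SemiSimplexCat) (f : Y ⟶ X), w Y.obj.len = false → S.arrows f)
    (F : SemiSimplexCatᵒᵖ ⥤ Type u) (G : Subfunctor F) :
    (∀ k : ℕ, w k = false →
      (G.sheafify J).obj (op (⟨⦋k⦌⟩ : SemiSimplexCat)) = G.obj (op ⟨⦋k⦌⟩)) ∧
    (w 0 = true →
      (G.sheafify J).obj (op (⟨⦋0⦌⟩ : SemiSimplexCat)) = Set.univ) ∧
    (∀ k : ℕ, w (k + 1) = true →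
      (G.sheafify J).obj (op (⟨⦋k + 1⦌⟩ : SemiSimplexCat)) =
        { x | ∀ i : Fin (k + 2),
          F.map (semiδ i).op x ∈ (G.sheafify J).obj (op (⟨⦋k⦌⟩ : SemiSimplexCat)) }) := by
  have key : ∀ (X : SemiSimplexCat) (x : F.obj (op X)),
      x ∈ (G.sheafify J).obj (op X) ↔
      ∀ (Y : SemiSimplexCat) (f : Y ⟶ X), w Y.obj.len = false →
        F.map f.op x ∈ G.obj (op Y) := fun X x => hJ X (G.sieveOfSection x)
  refine ⟨?_, ?_, ?_⟩
  · intro k hk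
    ext x
    rw [key]
    constructor
    · intro h
      have := h ⟨⦋k⦌⟩ (𝟙 _) hk
      simpa using this
    · intro hx Y f _
      exact G.map f.op hx
  · intro hw
    ext x
    simp only [Set.mem_univ, iff_true]
    rw [key]
    intro Y f hf
    have hle : Y.obj.len ≤ 0 := @SimplexCategory.len_le_of_mono _ _ f.1 f.2
    interval_cases h : Y.obj.len
    · rw [hw] at hf; exact absurd hf (by simp)
  · intro k hw
    ext x
    rw [key]
    constructor
    · intro h i
      rw [key]
      intro Y g hg
      rw [← FunctorToTypes.map_comp_apply, ← op_comp]
      exact h Y (g ≫ semiδ i) hg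
    · intro h Y f hf
      have hne : Y.obj.len ≠ k + 1 := fun e => by rw [e, hw] at hf; simp at hf
      have hle : Y.obj.len ≤ k + 1 := @SimplexCategory.len_le_of_mono _ _ f.1 f.2
      have hlt : Y.obj.len < k + 1 := lt_of_le_of_ne hle hne
      have hsurj : ¬ Function.Surjective f.1.toOrderHom := by
        intro hs
        have := Fintype.card_le_of_surjective _ hs
        simp only [SimplexCategory.len_mk, Fintype.card_fin] at this
        omega
      obtain ⟨i, θ', hθ⟩ := SimplexCategory.eq_comp_δ_of_not_surjective f.1 hsurj
      have hmono : Mono θ' := by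
        have : Mono (θ' ≫ SimplexCategory.δ i) := hθ ▸ f.2
        exact mono_of_mono θ' (SimplexCategory.δ i)
      have hf' : f = (⟨θ', hmono⟩ : Y ⟶ ⟨⦋k⦌⟩) ≫ semiδ i := by
        apply WideSubcategory.hom_ext
        exact hθ
      rw [hf', op_comp, FunctorToTypes.map_comp_apply]
      have := h i
      rw [key] at this
      exact this Y ⟨θ', hmono⟩ hf
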